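/- Define D_K : ℝ^k → ℝ^d by D_K V = (1/|K|) Σ_σ V_σ n_{K,σ} and L_K : ℝ^k → ℝ^k by (L_K V)_σ = V_σ/|σ| − D_K V · (x̄_σ − x_K). Let R be the k×d matrix with rows (|σ|(x̄_σ − x_K)^T)_σ. Then ker(L_K) = Im(R), and dim ker(L_K) = d. -/

import Mathlib

open Matrix BigOperators

/-- Lemma 3.4 of the paper: with `D_K V = (1/|K|) Σ_σ V_σ n_σ` and
`(L_K V)_σ = V_σ/|σ| - D_K V·(x̄_σ - x_K)`, the kernel of `L_K` equals the image of
the matrix `R` with rows `(|σ|(x̄_σ - x_K)^T)_σ`, and `dim ker(L_K) = d`. -/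
theorem stmt10 (d k : ℕ) (area : Fin k → ℝ) (harea : ∀ σ, 0 < area σ)
    (n xbar : Fin k → (Fin d → ℝ)) (xK : Fin d → ℝ) (volK : ℝ) (hvol : 0 < volK)
    (hspan : Submodule.span ℝ (Set.range n) = ⊤)
    (hmagic : ∀ e : Fin d → ℝ,
      volK • e = ∑ σ, (area σ * (e ⬝ᵥ n σ)) • (xbar σ - xK))
    (DK : (Fin k → ℝ) →ₗ[ℝ] (Fin d → ℝ))
    (hD : ∀ V, DK V = volK⁻¹ • ∑ σ, V σ • n σ)
    (LK : (Fin k → ℝ) →ₗ[ℝ] (Fin k → ℝ))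
    (hL : ∀ V σ, LK V σ = V σ / area σ - DK V ⬝ᵥ (xbar σ - xK))
    (R : Matrix (Fin k) (Fin d) ℝ)
    (hR : ∀ σ j, R σ j = area σ * (xbar σ j - xK j)) :
    LinearMap.ker LK = LinearMap.range R.mulVecLin ∧
      Module.finrank ℝ (LinearMap.ker LK) = d := by
  -- component form of hmagic
  have hmagic' : ∀ (e : Fin d → ℝ) (i : Fin d),
      volK * e i = ∑ σ, area σ * (e ⬝ᵥ n σ) * (xbar σ i - xK i) := by
    intro e i
    have := congrFun (hmagic e) i
    simpa [Finset.sum_apply, smul_eq_mul, Pi.sub_apply] using this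
  -- R.mulVec formula
  have hRmul : ∀ (e : Fin d → ℝ) (σ : Fin k),
      R.mulVec e σ = area σ * ((xbar σ - xK) ⬝ᵥ e) := by
    intro e σ
    simp only [Matrix.mulVec, dotProduct, hR, Pi.sub_apply, Finset.mul_sum]
    exact Finset.sum_congr rfl fun j _ => by ring
  -- key symmetric identity
  have key : ∀ (e : Fin d → ℝ) (j : Fin d),
      ∑ σ, (area σ * ((xbar σ - xK) ⬝ᵥ e)) * n σ j = volK * e j := by
    intro e j
    have h1 : ∀ σ : Fin k, (area σ * ((xbar σ - xK) ⬝ᵥ e)) * n σ j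
        = ∑ i, e i * (area σ * n σ j * (xbar σ i - xK i)) := by
      intro σ
      simp only [dotProduct, Pi.sub_apply, Finset.mul_sum, Finset.sum_mul]
      exact Finset.sum_congr rfl fun i _ => by ring
    rw [Finset.sum_congr rfl fun σ _ => h1 σ, Finset.sum_comm]
    have h2 : ∀ i : Fin d, ∑ σ, area σ * n σ j * (xbar σ i - xK i)
        = volK * (Pi.single j 1 : Fin d → ℝ) i := by
      intro i
      rw [hmagic' (Pi.single j 1) i]
      exact Finset.sum_congr rfl fun σ _ => by
        simp [single_dotProduct]
    calc ∑ i, ∑ σ, e i * (area σ * n σ j * (xbar σ i - xK i))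
        = ∑ i, e i * (volK * (Pi.single j 1 : Fin d → ℝ) i) := by
          refine Finset.sum_congr rfl fun i _ => ?_
          rw [← Finset.mul_sum, h2 i]
      _ = volK * e j := by
          rw [Finset.sum_eq_single j]
          · simp [mul_comm]
          · intro i _ hi; simp [Pi.single_eq_of_ne hi]
          · simp
  -- DK (R.mulVec e) = e
  have hDR : ∀ e : Fin d → ℝ, DK (R.mulVec e) = e := by
    intro e
    funext j
    rw [hD]
    have : (∑ σ, R.mulVec e σ • n σ) j = volK * e j := by
      rw [Finset.sum_apply]
      simp only [Pi.smul_apply, smul_eq_mul, hRmul]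
      exact key e j
    simp only [Pi.smul_apply, smul_eq_mul, this]
    field_simp
  -- ker LK = range
  have hker : LinearMap.ker LK = LinearMap.range R.mulVecLin := by
    ext V
    simp only [LinearMap.mem_ker, LinearMap.mem_range, Matrix.mulVecLin_apply]
    constructor
    · intro hV
      refine ⟨DK V, ?_⟩
      funext σ
      have := congrFun hV σ
      rw [hL] at this
      have h0 : V σ / area σ = DK V ⬝ᵥ (xbar σ - xK) := by
        simpa [sub_eq_zero] using this
      rw [hRmul, dotProduct_comm, ← h0,
        mul_div_cancel₀ _ (harea σ).ne']
    · rintro ⟨e, rfl⟩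
      funext σ
      rw [hL, hDR, hRmul]
      rw [dotProduct_comm]
      have := (harea σ).ne'
      field_simp
      simp
  refine ⟨hker, ?_⟩
  rw [hker]
  have hinj : Function.Injective R.mulVecLin := by
    rw [← LinearMap.ker_eq_bot]
    rw [LinearMap.ker_eq_bot']
    intro e he
    funext j
    have h0 : volK * e j = 0 := by
      rw [← key e j]
      refine Finset.sum_eq_zero fun σ _ => ?_
      have := congrFun he σ
      rw [Matrix.mulVecLin_apply, hRmul] at this
      have h' : area σ * ((xbar σ - xK) ⬝ᵥ e) = 0 := by simpa using this
      rw [h', zero_mul]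
    have := hvol.ne'
    simpa [mul_eq_zero, this] using h0
  rw [LinearMap.finrank_range_of_inj hinj]
  simp
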